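/- For a pointed topological space (X, x₀), π₁^wh(X, x₀) is a topological group if and only if for every loop ζ based at x₀ and every open neighborhood U of x₀, there exists an open neighborhood V of x₀ such that for every loop η based at x₀ with image in V, the conjugate ζ·η·ζ⁻ is path-homotopic to some loop based at x₀ with image in U. -/

import Mathlib

open Set TopologicalSpace

attribute [local instance] Path.Homotopic.setoid

universe u v

variable {X : Type u} [TopologicalSpace X]

/-- The basic whisker-topology set `B([ζ],U)`: all classes of the form `[ζ·η]`
where `η` is a loop based at `x₀` with image in `U`. -/
def whiskerB {x₀ : X} (ζ : Path.Homotopic.Quotient x₀ x₀) (U : Set X) :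
    Set (Path.Homotopic.Quotient x₀ x₀) :=
  {g | ∃ η : Path x₀ x₀, Set.range η ⊆ U ∧ g = Path.Homotopic.Quotient.trans ζ ⟦η⟧}

/-- The whisker topology on `π₁(X, x₀)`, generated by the basic sets `B([ζ],U)`
for `U` an open neighborhood of `x₀`. -/
def whiskerTopology (x₀ : X) : TopologicalSpace (Path.Homotopic.Quotient x₀ x₀) :=
  TopologicalSpace.generateFrom
    {S | ∃ (ζ : Path.Homotopic.Quotient x₀ x₀) (U : Set X),
      IsOpen U ∧ x₀ ∈ U ∧ S = whiskerB ζ U}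

/-- Inversion `[ζ] ↦ [ζ⁻]` on `π₁(X, x₀)`. -/
def whiskerInv {x₀ : X} : Path.Homotopic.Quotient x₀ x₀ → Path.Homotopic.Quotient x₀ x₀ :=
  Quotient.map Path.symm (fun _ _ h => Nonempty.map Path.Homotopy.symm₂ h)

/-- `π₁^wh(X, x₀)` is a topological group: the multiplication `([ζ],[η]) ↦ [ζ·η]`
is jointly continuous and inversion `[ζ] ↦ [ζ⁻]` is continuous, with respect to
the whisker topology. -/
def IsWhiskerTopGroup (x₀ : X) : Prop :=
  letI := whiskerTopology x₀
  Continuous (fun p : Path.Homotopic.Quotient x₀ x₀ × Path.Homotopic.Quotient x₀ x₀ =>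
    Path.Homotopic.Quotient.trans p.1 p.2) ∧
  Continuous (whiskerInv (x₀ := x₀))

namespace WhiskerAux

variable {x₀ : X}

theorem _root_.Path.Homotopic.comp_lift {x₀ x₁ x₂ : X} (P₀ : Path x₀ x₁) (P₁ : Path x₁ x₂) :
    (⟦P₀.trans P₁⟧ : Path.Homotopic.Quotient x₀ x₂) = Path.Homotopic.Quotient.trans ⟦P₀⟧ ⟦P₁⟧ :=
  rfl

lemma comp_assoc (a b c : Path.Homotopic.Quotient x₀ x₀) :
    Path.Homotopic.Quotient.trans (Path.Homotopic.Quotient.trans a b) c = Path.Homotopic.Quotient.trans a (Path.Homotopic.Quotient.trans b c) := by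
  induction a using Quotient.inductionOn
  induction b using Quotient.inductionOn
  induction c using Quotient.inductionOn
  rw [← Path.Homotopic.comp_lift, ← Path.Homotopic.comp_lift, ← Path.Homotopic.comp_lift,
    ← Path.Homotopic.comp_lift]
  exact Quotient.sound ⟨Path.Homotopy.transAssoc _ _ _⟩

lemma comp_refl (a : Path.Homotopic.Quotient x₀ x₀) :
    Path.Homotopic.Quotient.trans a ⟦Path.refl x₀⟧ = a := by
  induction a using Quotient.inductionOn
  rw [← Path.Homotopic.comp_lift]
  exact Quotient.sound ⟨Path.Homotopy.transRefl _⟩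

lemma refl_comp (a : Path.Homotopic.Quotient x₀ x₀) :
    Path.Homotopic.Quotient.trans ⟦Path.refl x₀⟧ a = a := by
  induction a using Quotient.inductionOn
  rw [← Path.Homotopic.comp_lift]
  exact Quotient.sound ⟨Path.Homotopy.reflTrans _⟩

lemma whiskerInv_mk (p : Path x₀ x₀) : whiskerInv ⟦p⟧ = ⟦p.symm⟧ := rfl

lemma comp_symm (a : Path.Homotopic.Quotient x₀ x₀) :
    Path.Homotopic.Quotient.trans a (whiskerInv a) = ⟦Path.refl x₀⟧ := by
  induction a using Quotient.inductionOn
  rw [whiskerInv_mk, ← Path.Homotopic.comp_lift]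
  exact Quotient.sound ⟨(Path.Homotopy.reflTransSymm _).symm⟩

lemma symm_comp (a : Path.Homotopic.Quotient x₀ x₀) :
    Path.Homotopic.Quotient.trans (whiskerInv a) a = ⟦Path.refl x₀⟧ := by
  induction a using Quotient.inductionOn
  rw [whiskerInv_mk, ← Path.Homotopic.comp_lift]
  exact Quotient.sound ⟨(Path.Homotopy.reflSymmTrans _).symm⟩

lemma comp_symm_cancel (b z : Path.Homotopic.Quotient x₀ x₀) :
    Path.Homotopic.Quotient.trans b (Path.Homotopic.Quotient.trans (whiskerInv b) z) = z := by
  rw [← comp_assoc, comp_symm, refl_comp]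

lemma symm_comp_cancel (b z : Path.Homotopic.Quotient x₀ x₀) :
    Path.Homotopic.Quotient.trans (whiskerInv b) (Path.Homotopic.Quotient.trans b z) = z := by
  rw [← comp_assoc, symm_comp, refl_comp]

lemma key_mul (a b x y : Path.Homotopic.Quotient x₀ x₀) :
    Path.Homotopic.Quotient.trans (Path.Homotopic.Quotient.trans a x) (Path.Homotopic.Quotient.trans b y)
      = Path.Homotopic.Quotient.trans (Path.Homotopic.Quotient.trans a b) (Path.Homotopic.Quotient.trans (Path.Homotopic.Quotient.trans (Path.Homotopic.Quotient.trans (whiskerInv b) x) b) y) := by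
  simp only [comp_assoc, comp_symm_cancel]

lemma key_inv (a x : Path.Homotopic.Quotient x₀ x₀) :
    Path.Homotopic.Quotient.trans x (whiskerInv a)
      = Path.Homotopic.Quotient.trans (whiskerInv a) (Path.Homotopic.Quotient.trans (Path.Homotopic.Quotient.trans a x) (whiskerInv a)) := by
  simp only [comp_assoc, symm_comp_cancel]

lemma whiskerInv_comp (a b : Path.Homotopic.Quotient x₀ x₀) :
    whiskerInv (Path.Homotopic.Quotient.trans a b) = Path.Homotopic.Quotient.trans (whiskerInv b) (whiskerInv a) := by
  induction a using Quotient.inductionOn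
  induction b using Quotient.inductionOn
  rw [← Path.Homotopic.comp_lift, whiskerInv_mk, whiskerInv_mk, whiskerInv_mk,
    ← Path.Homotopic.comp_lift, Path.trans_symm]

/-- `⟦p⟧` with its type stated as `Path.Homotopic.Quotient`, for instance resolution. -/
def paq {x₀ : X} (p : Path x₀ x₀) : Path.Homotopic.Quotient x₀ x₀ := ⟦p⟧

lemma paq_eq {x₀ : X} (p : Path x₀ x₀) : paq p = ⟦p⟧ := rfl

lemma mem_whiskerB_self {ζ : Path.Homotopic.Quotient x₀ x₀} {U : Set X} (hU : x₀ ∈ U) :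
    ζ ∈ whiskerB ζ U :=
  ⟨Path.refl x₀, by rw [Path.refl_range]; exact singleton_subset_iff.2 hU,
    (comp_refl ζ).symm⟩

lemma whiskerB_mono {ζ : Path.Homotopic.Quotient x₀ x₀} {U V : Set X} (h : U ⊆ V) :
    whiskerB ζ U ⊆ whiskerB ζ V := by
  rintro g ⟨η, hη, rfl⟩
  exact ⟨η, hη.trans h, rfl⟩

lemma whiskerB_subset {ζ g : Path.Homotopic.Quotient x₀ x₀} {U : Set X}
    (hg : g ∈ whiskerB ζ U) : whiskerB g U ⊆ whiskerB ζ U := by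
  obtain ⟨η, hη, rfl⟩ := hg
  rintro _ ⟨η', hη', rfl⟩
  refine ⟨η.trans η', ?_, ?_⟩
  · rw [Path.trans_range]; exact union_subset hη hη'
  · rw [Path.Homotopic.comp_lift, ← comp_assoc ζ ⟦η⟧ ⟦η'⟧]

/-- The generating family of the whisker topology. -/
def whiskerBasis (x₀ : X) : Set (Set (Path.Homotopic.Quotient x₀ x₀)) :=
  {S | ∃ (ζ : Path.Homotopic.Quotient x₀ x₀) (U : Set X),
    IsOpen U ∧ x₀ ∈ U ∧ S = whiskerB ζ U}

lemma isBasis (x₀ : X) :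
    @IsTopologicalBasis _ (whiskerTopology x₀) (whiskerBasis x₀) := by
  letI := whiskerTopology x₀
  refine ⟨?_, ?_, rfl⟩
  · rintro t₁ ⟨ζ₁, U₁, hU₁, hx₁, rfl⟩ t₂ ⟨ζ₂, U₂, hU₂, hx₂, rfl⟩ g ⟨hg₁, hg₂⟩
    refine ⟨whiskerB g (U₁ ∩ U₂), ⟨g, U₁ ∩ U₂, hU₁.inter hU₂, ⟨hx₁, hx₂⟩, rfl⟩,
      mem_whiskerB_self ⟨hx₁, hx₂⟩, ?_⟩
    exact subset_inter
      ((whiskerB_mono inter_subset_left).trans (whiskerB_subset hg₁))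
      ((whiskerB_mono inter_subset_right).trans (whiskerB_subset hg₂))
  · refine eq_univ_of_forall fun g => ?_
    exact ⟨whiskerB g univ, ⟨g, univ, isOpen_univ, mem_univ _, rfl⟩,
      mem_whiskerB_self (mem_univ _)⟩

lemma mem_nhds_iff (x₀ : X) (g : Path.Homotopic.Quotient x₀ x₀)
    (s : Set (Path.Homotopic.Quotient x₀ x₀)) :
    letI := whiskerTopology x₀
    s ∈ nhds g ↔ ∃ U : Set X, IsOpen U ∧ x₀ ∈ U ∧ whiskerB g U ⊆ s := by
  letI := whiskerTopology x₀
  rw [(isBasis x₀).mem_nhds_iff]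
  constructor
  · rintro ⟨t, ⟨ζ, U, hU, hx, rfl⟩, hgt, hts⟩
    exact ⟨U, hU, hx, (whiskerB_subset hgt).trans hts⟩
  · rintro ⟨U, hU, hx, hsub⟩
    exact ⟨whiskerB g U, ⟨g, U, hU, hx, rfl⟩, mem_whiskerB_self hx, hsub⟩

end WhiskerAux

open WhiskerAux

/-- `π₁^wh(X, x₀)` is a topological group if and only if for every loop `ζ`
based at `x₀` and every open neighborhood `U` of `x₀`, there exists an open neighborhood `V`
of `x₀` such that for every loop `η` based at `x₀` with image in `V`, the conjugate
`ζ·η·ζ⁻` is path-homotopic to a loop based at `x₀` with image in `U`. -/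
theorem whisker_topGroup_iff_conjugate_criterion (x₀ : X) :
    IsWhiskerTopGroup x₀ ↔
    ∀ ζ : Path x₀ x₀, ∀ U : Set X, IsOpen U → x₀ ∈ U →
      ∃ V : Set X, IsOpen V ∧ x₀ ∈ V ∧
        ∀ η : Path x₀ x₀, Set.range ⇑η ⊆ V →
          ∃ κ : Path x₀ x₀, Set.range ⇑κ ⊆ U ∧ ((ζ.trans η).trans ζ.symm).Homotopic κ := by
  letI := whiskerTopology x₀
  constructor
  · rintro ⟨hm, -⟩ ζ U hU hx
    have k1 : Continuous fun g : Path.Homotopic.Quotient x₀ x₀ => (paq ζ, g) :=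
      continuous_const.prodMk continuous_id
    have k2 : Continuous fun g : Path.Homotopic.Quotient x₀ x₀ =>
        (Path.Homotopic.Quotient.trans (paq ζ) g, paq ζ.symm) :=
      (hm.comp k1).prodMk continuous_const
    have hcont : Continuous fun g : Path.Homotopic.Quotient x₀ x₀ =>
        Path.Homotopic.Quotient.trans (Path.Homotopic.Quotient.trans (paq ζ) g) (paq ζ.symm) :=
      hm.comp k2
    have hopen : IsOpen (whiskerB (paq (Path.refl x₀)) U) :=
      (isBasis x₀).isOpen ⟨paq (Path.refl x₀), U, hU, hx, rfl⟩
    have hc1 : Path.Homotopic.Quotient.trans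
        (Path.Homotopic.Quotient.trans (paq ζ) (paq (Path.refl x₀))) (paq ζ.symm)
        ∈ whiskerB (paq (Path.refl x₀)) U := by
      have h1 : Path.Homotopic.Quotient.trans
          (Path.Homotopic.Quotient.trans (paq ζ) (paq (Path.refl x₀))) (paq ζ.symm)
          = paq (Path.refl x₀) := by
        simp only [paq_eq]
        rw [comp_refl ⟦ζ⟧, ← whiskerInv_mk ζ, comp_symm ⟦ζ⟧]
      rw [h1]
      exact mem_whiskerB_self hx
    obtain ⟨V, hV, hxV, hsub⟩ :=
      (mem_nhds_iff x₀ _ _).1 ((hopen.preimage hcont).mem_nhds hc1)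
    refine ⟨V, hV, hxV, fun η hη => ?_⟩
    have hmem : (⟦η⟧ : Path.Homotopic.Quotient x₀ x₀) ∈ whiskerB (paq (Path.refl x₀)) V :=
      ⟨η, hη, (refl_comp _).symm⟩
    obtain ⟨κ, hκ, heq⟩ := hsub hmem
    simp only [paq_eq] at heq
    rw [refl_comp ⟦κ⟧] at heq
    refine ⟨κ, hκ, Quotient.exact (s := Path.Homotopic.setoid x₀ x₀) ?_⟩
    rw [Path.Homotopic.comp_lift, Path.Homotopic.comp_lift]
    exact heq
  · intro h
    constructor
    · -- multiplication is continuous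
      rw [continuous_iff_continuousAt]
      rintro ⟨a, b⟩
      refine Filter.tendsto_def.mpr fun s hs => ?_
      obtain ⟨U, hU, hx, hsub⟩ := (mem_nhds_iff x₀ _ _).1 hs
      obtain ⟨β, rfl⟩ := Quotient.exists_rep b
      obtain ⟨V, hV, hxV, hVcrit⟩ := h β.symm U hU hx
      change _ ∈ nhds (a, Path.Homotopic.Quotient.mk β)
      rw [nhds_prod_eq, Filter.mem_prod_iff]
      refine ⟨whiskerB a V, (mem_nhds_iff x₀ _ _).2 ⟨V, hV, hxV, subset_rfl⟩,
        whiskerB ⟦β⟧ U, (mem_nhds_iff x₀ _ _).2 ⟨U, hU, hx, subset_rfl⟩, ?_⟩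
      rintro ⟨g, h'⟩ ⟨⟨η, hη, rfl⟩, ⟨η', hη', rfl⟩⟩
      obtain ⟨κ, hκ, hhom⟩ := hVcrit η hη
      have h2 := Quotient.sound (s := Path.Homotopic.setoid x₀ x₀) hhom
      rw [Path.symm_symm, Path.Homotopic.comp_lift, Path.Homotopic.comp_lift,
        ← whiskerInv_mk β] at h2
      refine hsub ⟨κ.trans η', ?_, ?_⟩
      · rw [Path.trans_range]; exact union_subset hκ hη'
      · show Path.Homotopic.Quotient.trans (Path.Homotopic.Quotient.trans a ⟦η⟧)
            (Path.Homotopic.Quotient.trans ⟦β⟧ ⟦η'⟧)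
          = Path.Homotopic.Quotient.trans (Path.Homotopic.Quotient.trans a ⟦β⟧) ⟦κ.trans η'⟧
        rw [Path.Homotopic.comp_lift κ η', ← h2]
        exact key_mul a ⟦β⟧ ⟦η⟧ ⟦η'⟧
    · -- inversion is continuous
      rw [continuous_iff_continuousAt]
      intro a
      refine Filter.tendsto_def.mpr fun s hs => ?_
      obtain ⟨U, hU, hx, hsub⟩ := (mem_nhds_iff x₀ _ _).1 hs
      obtain ⟨α, rfl⟩ := Quotient.exists_rep a
      obtain ⟨V, hV, hxV, hVcrit⟩ := h α U hU hx
      refine (mem_nhds_iff x₀ _ _).2 ⟨V, hV, hxV, ?_⟩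
      rintro _ ⟨η, hη, rfl⟩
      have hηs : Set.range ⇑η.symm ⊆ V := by rwa [Path.symm_range]
      obtain ⟨κ, hκ, hhom⟩ := hVcrit η.symm hηs
      have h2 := Quotient.sound (s := Path.Homotopic.setoid x₀ x₀) hhom
      rw [Path.Homotopic.comp_lift, Path.Homotopic.comp_lift, ← whiskerInv_mk α] at h2
      refine hsub ⟨κ, hκ, ?_⟩
      show whiskerInv (Path.Homotopic.Quotient.trans ⟦α⟧ ⟦η⟧)
          = Path.Homotopic.Quotient.trans (whiskerInv ⟦α⟧) ⟦κ⟧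
      rw [whiskerInv_comp ⟦α⟧ ⟦η⟧, whiskerInv_mk η, ← h2]
      exact key_inv ⟦α⟧ ⟦η.symm⟧
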